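/- The two matrices λ* = [[1,0,0],[0,1,0],[0,1,1]] and μ* = [[1,0,0],[0,1,3],[0,0,1]] over 𝔽₅ generate a subgroup of SL₃(𝔽₅) that is isomorphic to SL₂(𝔽₅) (a group of order 120). -/

import Mathlib

open Matrix
abbrev SL2 := Matrix.SpecialLinearGroup (Fin 2) (ZMod 5)
abbrev SL3 := Matrix.SpecialLinearGroup (Fin 3) (ZMod 5)

def tA (c : ZMod 5) : SL2 := ⟨!![1,0;c,1], by simp [Matrix.det_fin_two]⟩
def uA (c : ZMod 5) : SL2 := ⟨!![1,c;0,1], by simp [Matrix.det_fin_two]⟩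

lemma tA_mul (c d : ZMod 5) : tA c * tA d = tA (c+d) := by
  apply Subtype.ext
  show (tA c).1 * (tA d).1 = _
  simp only [tA, Matrix.mul_fin_two]
  norm_num [add_comm]
lemma uA_mul (c d : ZMod 5) : uA c * uA d = uA (c+d) := by
  apply Subtype.ext
  show (uA c).1 * (uA d).1 = _
  simp only [uA, Matrix.mul_fin_two]
  norm_num [add_comm]

lemma tA_pow (c : ZMod 5) (n : ℕ) : tA c ^ n = tA (n * c) := by
  induction n with
  | zero => simp; apply Subtype.ext; show _ = (tA 0).1; ext i j; fin_cases i <;> fin_cases j <;> rfl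
  | succ n ih => rw [pow_succ, ih, tA_mul]; congr 1; push_cast; ring
lemma uA_pow (c : ZMod 5) (n : ℕ) : uA c ^ n = uA (n * c) := by
  induction n with
  | zero => simp; apply Subtype.ext; show _ = (uA 0).1; ext i j; fin_cases i <;> fin_cases j <;> rfl
  | succ n ih => rw [pow_succ, ih, uA_mul]; congr 1; push_cast; ring

lemma mem_cl (M : SL2) : M ∈ Subgroup.closure {tA 1, uA 3} := by
  haveI : Fact (Nat.Prime 5) := ⟨by norm_num⟩
  set H := Subgroup.closure ({tA 1, uA 3} : Set SL2) with hH
  have ht1 : tA 1 ∈ H := Subgroup.subset_closure (by left; rfl)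
  have hu3 : uA 3 ∈ H := Subgroup.subset_closure (by right; rfl)
  have ht : ∀ c : ZMod 5, tA c ∈ H := by
    intro c
    have h1 : tA 1 ^ c.val = tA c := by
      rw [tA_pow, ZMod.natCast_val, ZMod.cast_id, mul_one]
    exact h1 ▸ pow_mem ht1 c.val
  have hu : ∀ c : ZMod 5, uA c ∈ H := by
    intro c
    have h1 : uA 3 ^ (2*c).val = uA c := by
      have h6 : (6 : ZMod 5) = 1 := rfl
      have hc6 : ((2*c).val : ZMod 5) * 3 = c := by
        rw [ZMod.natCast_val, ZMod.cast_id]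
        linear_combination c * h6
      rw [uA_pow, hc6]
    exact h1 ▸ pow_mem hu3 (2*c).val
  have key : ∀ N : SL2, (N : Matrix (Fin 2) (Fin 2) (ZMod 5)) 1 0 ≠ 0 → N ∈ H := by
    intro N hc
    set a := (N : Matrix (Fin 2) (Fin 2) (ZMod 5)) 0 0 with ha
    set b := (N : Matrix (Fin 2) (Fin 2) (ZMod 5)) 0 1 with hb
    set c := (N : Matrix (Fin 2) (Fin 2) (ZMod 5)) 1 0 with hcc
    set d := (N : Matrix (Fin 2) (Fin 2) (ZMod 5)) 1 1 with hd
    have hdet : a * d - b * c = 1 := by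
      have h2 := N.2
      rwa [Matrix.det_fin_two] at h2
    have hNeq : N = uA ((a-1)/c) * tA c * uA ((d-1)/c) := by
      apply Subtype.ext
      show (N : Matrix (Fin 2) (Fin 2) (ZMod 5)) = (uA _).1 * (tA _).1 * (uA _).1
      simp only [uA, tA, Matrix.mul_fin_two]
      ext i j
      fin_cases i <;> fin_cases j <;>
        simp only [Fin.mk_zero, Fin.mk_one, Matrix.cons_val', Matrix.cons_val_zero,
          Matrix.cons_val_one, Matrix.head_cons, Matrix.empty_val', Matrix.cons_val_fin_one,
          Matrix.of_apply, Fin.isValue, ← ha, ← hb, ← hcc, ← hd]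
      · field_simp
        ring
      · field_simp
        linear_combination -hdet
      · simp [Matrix.vecHead]
      · field_simp
        ring
    rw [hNeq]
    exact mul_mem (mul_mem (hu _) (ht _)) (hu _)
  by_cases hc : (M : Matrix (Fin 2) (Fin 2) (ZMod 5)) 1 0 = 0
  · have h2 : ((M * tA 1 : SL2) : Matrix (Fin 2) (Fin 2) (ZMod 5)) 1 0 ≠ 0 := by
      have he : ((M * tA 1 : SL2) : Matrix (Fin 2) (Fin 2) (ZMod 5)) 1 0
          = (M : Matrix (Fin 2) (Fin 2) (ZMod 5)) 1 1 := by
        show ((M : Matrix (Fin 2) (Fin 2) (ZMod 5)) * (tA 1).1) 1 0 = _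
        simp [tA, Matrix.mul_apply, Fin.sum_univ_two, hc]
      rw [he]
      intro hd
      have h3 := M.2
      rw [Matrix.det_fin_two, hc, hd] at h3
      simp at h3
    have h4 := key _ h2
    have h5 : M * tA 1 * (tA 1)⁻¹ ∈ H := mul_mem h4 (inv_mem ht1)
    simpa using h5
  · exact key M hc

def phiFun (M : SL2) : SL3 :=
  ⟨!![1, 0, 0; 0, (M : Matrix (Fin 2) (Fin 2) (ZMod 5)) 0 0, (M : Matrix (Fin 2) (Fin 2) (ZMod 5)) 0 1;
      0, (M : Matrix (Fin 2) (Fin 2) (ZMod 5)) 1 0, (M : Matrix (Fin 2) (Fin 2) (ZMod 5)) 1 1], by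
    have h2 := M.2
    rw [Matrix.det_fin_two] at h2
    rw [Matrix.det_fin_three]
    simp only [Matrix.cons_val', Matrix.cons_val_zero, Matrix.cons_val_one, Matrix.head_cons,
      Matrix.empty_val', Matrix.cons_val_fin_one, Matrix.of_apply, Matrix.cons_val_two,
      Matrix.tail_cons, Matrix.head_fin_const]
    linear_combination h2⟩

lemma phi_entries (M : SL2) :
    ((phiFun M : SL3) : Matrix (Fin 3) (Fin 3) (ZMod 5)) =
    !![1, 0, 0; 0, (M : Matrix (Fin 2) (Fin 2) (ZMod 5)) 0 0, (M : Matrix (Fin 2) (Fin 2) (ZMod 5)) 0 1;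
      0, (M : Matrix (Fin 2) (Fin 2) (ZMod 5)) 1 0, (M : Matrix (Fin 2) (Fin 2) (ZMod 5)) 1 1] := rfl

set_option maxHeartbeats 2000000 in
def phi : SL2 →* SL3 where
  toFun := phiFun
  map_one' := by
    apply Subtype.ext
    rw [phi_entries]
    simp only [Matrix.SpecialLinearGroup.coe_one]
    norm_num [Matrix.one_apply]
    ext i j
    fin_cases i <;> fin_cases j <;> rfl
  map_mul' := by
    intro A B
    apply Subtype.ext
    rw [Matrix.SpecialLinearGroup.coe_mul, phi_entries, phi_entries, phi_entries,
      Matrix.mul_fin_three]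
    simp only [Matrix.SpecialLinearGroup.coe_mul, Matrix.mul_apply, Fin.sum_univ_two]
    ext i j
    fin_cases i <;> fin_cases j <;>
      · simp
        try ring

lemma phi_inj : Function.Injective phi := by
  intro A B h
  apply Subtype.ext
  have h1 := congrArg (fun X : SL3 => (X : Matrix (Fin 3) (Fin 3) (ZMod 5))) h
  simp only [phi, MonoidHom.coe_mk, OneHom.coe_mk, phi_entries] at h1
  ext i j
  fin_cases i <;> fin_cases j
  · exact congrFun (congrFun h1 1) 1
  · exact congrFun (congrFun h1 1) 2
  · exact congrFun (congrFun h1 2) 1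
  · exact congrFun (congrFun h1 2) 2

lemma phi_tA1 : ((phi (tA 1) : SL3) : Matrix (Fin 3) (Fin 3) (ZMod 5)) = !![1, 0, 0; 0, 1, 0; 0, 1, 1] := by
  decide

lemma phi_uA3 : ((phi (uA 3) : SL3) : Matrix (Fin 3) (Fin 3) (ZMod 5)) = !![1, 0, 0; 0, 1, 3; 0, 0, 1] := by
  decide

lemma range_eq : Subgroup.closure {A : SL3 |
    (A : Matrix (Fin 3) (Fin 3) (ZMod 5)) = !![1, 0, 0; 0, 1, 0; 0, 1, 1] ∨
    (A : Matrix (Fin 3) (Fin 3) (ZMod 5)) = !![1, 0, 0; 0, 1, 3; 0, 0, 1]} = phi.range := by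
  have hset : {A : SL3 |
      (A : Matrix (Fin 3) (Fin 3) (ZMod 5)) = !![1, 0, 0; 0, 1, 0; 0, 1, 1] ∨
      (A : Matrix (Fin 3) (Fin 3) (ZMod 5)) = !![1, 0, 0; 0, 1, 3; 0, 0, 1]}
      = phi '' {tA 1, uA 3} := by
    ext A
    simp only [Set.mem_setOf_eq, Set.image_insert_eq, Set.image_singleton,
      Set.mem_insert_iff, Set.mem_singleton_iff]
    constructor
    · rintro (h | h)
      · left; exact Subtype.ext (h.trans phi_tA1.symm)
      · right; exact Subtype.ext (h.trans phi_uA3.symm)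
    · rintro (rfl | rfl)
      · left; exact phi_tA1
      · right; exact phi_uA3
  rw [hset, ← MonoidHom.map_closure]
  have htop : Subgroup.closure ({tA 1, uA 3} : Set SL2) = ⊤ :=
    top_unique fun M _ => mem_cl M
  rw [htop, ← MonoidHom.range_eq_map]

set_option maxRecDepth 10000 in
/-- The two matrices `λ* = [[1,0,0],[0,1,0],[0,1,1]]` and
`μ* = [[1,0,0],[0,1,3],[0,0,1]]` generate a subgroup of `SL₃(𝔽₅)` isomorphic to
`SL₂(𝔽₅)`, a group of order `120`. -/
theorem quartet_generators_give_SL2 :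
    Nonempty (↥(Subgroup.closure {A : Matrix.SpecialLinearGroup (Fin 3) (ZMod 5) |
        (A : Matrix (Fin 3) (Fin 3) (ZMod 5)) = !![1, 0, 0; 0, 1, 0; 0, 1, 1] ∨
        (A : Matrix (Fin 3) (Fin 3) (ZMod 5)) = !![1, 0, 0; 0, 1, 3; 0, 0, 1]}) ≃*
      Matrix.SpecialLinearGroup (Fin 2) (ZMod 5)) ∧
    Nat.card (Matrix.SpecialLinearGroup (Fin 2) (ZMod 5)) = 120 := by
  constructor
  · exact ⟨(MulEquiv.subgroupCongr range_eq).trans (MonoidHom.ofInjective phi_inj).symm⟩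
  · rw [Nat.card_eq_fintype_card]
    decide
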